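/- Assume Eξ < ∞ and that the walk is transient (E log ξ < ∞, E log ρ < 0). If there exist constants c > 0, γ > 0 and a sequence (b(n))_{n∈ℕ} which is regularly varying with index 1/γ such that for every x > 0, lim_{n→∞} ℙ[ max_{k ≤ S_n} L_k(S_n) / b(n) > x ] = 1 − exp(−c x^{−γ}), then for every x > 0, lim_{n→∞} ℙ[ max_{k ≤ n} L_k(n) / b(n) > x ] = 1 − exp(−(c/Eξ) x^{−γ}). -/

import Mathlib

open MeasureTheory ProbabilityTheory Filter Set Asymptotics
open scoped ENNReal NNReal Classical

noncomputable section

variable {Ω : Type*} [MeasurableSpace Ω]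

/-- Two-sided renewal sums `S_n` of the block lengths `ξ_j`. -/
def Spt (xi : ℤ → Ω → ℕ) (n : ℤ) (ω : Ω) : ℤ :=
  if 0 ≤ n then ∑ j ∈ Finset.range n.toNat, (xi (j + 1) ω : ℤ)
  else -∑ j ∈ Finset.range (-n).toNat, (xi (n + 1 + j) ω : ℤ)

/-- The sparse environment: `ω_k = λ_{n+1}` if `k = S_n` for some `n`, and `1/2` otherwise. -/
def envP (xi : ℤ → Ω → ℕ) (lam : ℤ → Ω → ℝ) (k : ℤ) (ω : Ω) : ℝ :=
  if h : ∃ n : ℤ, Spt xi n ω = k then lam (h.choose + 1) ω else 1 / 2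

/-- `ρ_k = (1 - λ_k)/λ_k`. -/
def rhoF (lam : ℤ → Ω → ℝ) (k : ℤ) (ω : Ω) : ℝ := (1 - lam k ω) / lam k ω

/-- Hitting time `T_n` of the site `n`. -/
def hitT (X : ℕ → Ω → ℤ) (n : ℤ) (ω : Ω) : ℕ := sInf {m : ℕ | X m ω = n}

/-- Local time `L_k(n)`: the number of visits to `k` up to time `T_n`. -/
def locL (X : ℕ → Ω → ℤ) (k n : ℤ) (ω : Ω) : ℕ :=
  ((Finset.range (hitT X n ω + 1)).filter fun m => X m ω = k).card

/-- `max_{k ≤ n} L_k(n)`, as an extended nonnegative real. -/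
def maxLoc (X : ℕ → Ω → ℤ) (n : ℤ) (ω : Ω) : ℝ≥0∞ :=
  ⨆ (k : ℤ) (_ : k ≤ n), (locL X k n ω : ℝ≥0∞)

/-- σ-algebra generated by the environment and the walk up to time `n`. -/
def walkFilt (xi : ℤ → Ω → ℕ) (lam : ℤ → Ω → ℝ) (X : ℕ → Ω → ℤ) (n : ℕ) :
    MeasurableSpace Ω :=
  (⨆ k : ℤ, MeasurableSpace.comap (fun ω => (xi k ω, lam k ω)) inferInstance) ⊔
    ⨆ m ∈ Finset.range (n + 1), MeasurableSpace.comap (X m) inferInstance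

/-- `Pr` is the annealed law of a random walk `X` in the sparse random environment built from
the i.i.d. sequence `((ξ_k, λ_k))_{k ∈ ℤ}`: the environment is i.i.d., the walk starts at `0`
and, conditionally on the environment and the past, steps up with probability `ω_k` and down
with probability `1 - ω_k` from site `k`. -/
structure IsRWSRE (Pr : Measure Ω) (xi : ℤ → Ω → ℕ) (lam : ℤ → Ω → ℝ)
    (X : ℕ → Ω → ℤ) : Prop where
  meas_xi : ∀ k, Measurable (xi k)
  meas_lam : ∀ k, Measurable (lam k)
  meas_X : ∀ n, Measurable (X n)
  xi_pos : ∀ k ω, 1 ≤ xi k ω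
  lam_mem : ∀ k ω, lam k ω ∈ Set.Ioo (0 : ℝ) 1
  indep : iIndepFun (fun k ω => (xi k ω, lam k ω)) Pr
  ident : ∀ k, IdentDistrib (fun ω => (xi k ω, lam k ω)) (fun ω => (xi 0 ω, lam 0 ω)) Pr Pr
  start : ∀ ω, X 0 ω = 0
  step_up : ∀ (n : ℕ) (A : Set Ω), MeasurableSet[walkFilt xi lam X n] A →
    (Pr (A ∩ {ω | X (n + 1) ω = X n ω + 1})).toReal = ∫ ω in A, envP xi lam (X n ω) ω ∂Pr
  step_down : ∀ (n : ℕ) (A : Set Ω), MeasurableSet[walkFilt xi lam X n] A →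
    (Pr (A ∩ {ω | X (n + 1) ω = X n ω - 1})).toReal
      = ∫ ω in A, (1 - envP xi lam (X n ω) ω) ∂Pr

section Aux
set_option linter.unusedSectionVars false

variable {Ω : Type*} [MeasurableSpace Ω] (xi : ℤ → Ω → ℕ) (lam : ℤ → Ω → ℝ) (X : ℕ → Ω → ℤ)

lemma Spt_succ (n : ℤ) (ω : Ω) :
    Spt xi (n + 1) ω = Spt xi n ω + (xi (n + 1) ω : ℤ) := by
  rcases le_or_gt 0 n with h | h
  · have h1 : (0:ℤ) ≤ n + 1 := by omega
    have ht : (n + 1).toNat = n.toNat + 1 := by omega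
    unfold Spt
    rw [if_pos h1, if_pos h, ht, Finset.sum_range_succ]
    congr 2
    rw [Int.toNat_of_nonneg h]
  · by_cases h2 : n = -1
    · subst h2
      simp [Spt, Finset.sum_range_one]
    · have h1 : ¬ (0:ℤ) ≤ n + 1 := by omega
      have h0 : ¬ (0:ℤ) ≤ n := by omega
      unfold Spt
      rw [if_neg h1, if_neg h0]
      have hK : (-n).toNat = (-(n+1)).toNat + 1 := by omega
      rw [hK, Finset.sum_range_succ']
      have h4 : ∑ j ∈ Finset.range (-(n+1)).toNat, (xi (n + 1 + (((j+1):ℕ):ℤ)) ω : ℤ)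
          = ∑ j ∈ Finset.range (-(n+1)).toNat, (xi (n + 1 + 1 + (j:ℤ)) ω : ℤ) := by
        apply Finset.sum_congr rfl
        intro j hj
        congr 2
        push_cast
        ring
      rw [h4]
      have h5 : xi (n + 1 + (((0:ℕ)):ℤ)) ω = xi (n + 1) ω := by norm_num
      rw [h5]
      ring

lemma Spt_strictMono (hpos : ∀ k ω, 1 ≤ xi k ω) (ω : Ω) :
    StrictMono (fun n => Spt xi n ω) := by
  apply strictMono_int_of_lt_succ
  intro n
  have := hpos (n+1) ω
  have h := Spt_succ xi n ω
  show Spt xi n ω < Spt xi (n+1) ω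
  omega

lemma Spt_nat (m : ℕ) (ω : Ω) :
    Spt xi (m : ℤ) ω = ∑ j ∈ Finset.range m, (xi ((j:ℤ) + 1) ω : ℤ) := by
  unfold Spt
  rw [if_pos (by positivity : (0:ℤ) ≤ (m:ℤ))]
  simp

lemma Spt_nat_ge (hpos : ∀ k ω, 1 ≤ xi k ω) (m : ℕ) (ω : Ω) :
    (m : ℤ) ≤ Spt xi (m : ℤ) ω := by
  rw [Spt_nat]
  calc (m : ℤ) = ∑ _j ∈ Finset.range m, (1:ℤ) := by simp
  _ ≤ _ := Finset.sum_le_sum (fun j _ => by exact_mod_cast hpos ((j:ℤ)+1) ω)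

lemma measurable_Spt (hxi : ∀ k, Measurable (xi k)) (n : ℤ) :
    Measurable (fun ω => Spt xi n ω) := by
  unfold Spt
  split_ifs with h
  · exact Finset.measurable_sum _ (fun j _ => (measurable_from_top).comp (hxi _))
  · exact (Finset.measurable_sum _ (fun j _ => (measurable_from_top).comp (hxi _))).neg

end Aux
section Aux2
set_option linter.unusedSectionVars false
variable {Ω : Type*} [MeasurableSpace Ω] (xi : ℤ → Ω → ℕ) (lam : ℤ → Ω → ℝ) (X : ℕ → Ω → ℤ)

lemma envP_eq_of (hpos : ∀ k ω, 1 ≤ xi k ω) {j k : ℤ} {ω : Ω} (hj : Spt xi j ω = k) :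
    envP xi lam k ω = lam (j + 1) ω := by
  have h : ∃ n : ℤ, Spt xi n ω = k := ⟨j, hj⟩
  rw [envP, dif_pos h]
  have := h.choose_spec
  have hinj := (Spt_strictMono xi hpos ω).injective
  have : h.choose = j := hinj (by show Spt xi h.choose ω = Spt xi j ω; rw [h.choose_spec, hj])
  rw [this]

lemma envP_mem (hlam : ∀ k ω, lam k ω ∈ Set.Ioo (0:ℝ) 1) (k : ℤ) (ω : Ω) :
    envP xi lam k ω ∈ Set.Icc (0:ℝ) 1 := by
  rw [envP]
  split_ifs with h
  · have := hlam (h.choose + 1) ω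
    exact ⟨this.1.le, this.2.le⟩
  · norm_num

lemma measurable_envP (hxi : ∀ k, Measurable (xi k)) (hlam : ∀ k, Measurable (lam k))
    (hpos : ∀ k ω, 1 ≤ xi k ω) (k : ℤ) : Measurable (envP xi lam k) := by
  intro s hs
  have key : envP xi lam k ⁻¹' s =
      (⋃ j : ℤ, ({ω | Spt xi j ω = k} ∩ (lam (j+1)) ⁻¹' s)) ∪
      ({ω | ∀ j : ℤ, Spt xi j ω ≠ k} ∩ (if (1:ℝ)/2 ∈ s then Set.univ else ∅)) := by
    ext ω
    simp only [Set.mem_preimage, Set.mem_union, Set.mem_iUnion, Set.mem_inter_iff,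
      Set.mem_setOf_eq]
    by_cases h : ∃ j : ℤ, Spt xi j ω = k
    · obtain ⟨j, hj⟩ := h
      rw [envP_eq_of xi lam hpos hj]
      constructor
      · intro hm; exact Or.inl ⟨j, hj, hm⟩
      · rintro (⟨j', hj', hm⟩ | ⟨hall, _⟩)
        · have : j' = j := (Spt_strictMono xi hpos ω).injective
            (by show Spt xi j' ω = Spt xi j ω; rw [hj, hj'])
          subst this; exact hm
        · exact absurd hj (hall j)
    · rw [envP, dif_neg h]
      push_neg at h
      constructor
      · intro hm
        refine Or.inr ⟨h, ?_⟩
        rw [if_pos hm]; trivial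
      · rintro (⟨j', hj', _⟩ | ⟨_, hmem⟩)
        · exact absurd hj' (h j')
        · by_cases hc : (1:ℝ)/2 ∈ s
          · exact hc
          · rw [if_neg hc] at hmem; exact absurd hmem (Set.notMem_empty ω)
  rw [key]
  apply MeasurableSet.union
  · exact MeasurableSet.iUnion fun j =>
      ((measurable_Spt xi hxi j) (by trivial : MeasurableSet {k})).inter ((hlam (j+1)) hs)
  · apply MeasurableSet.inter
    · have : {ω | ∀ j : ℤ, Spt xi j ω ≠ k} = ⋂ j : ℤ, {ω | Spt xi j ω = k}ᶜ := by
        ext ω; simp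
      rw [this]
      exact MeasurableSet.iInter fun j =>
        ((measurable_Spt xi hxi j) (by trivial : MeasurableSet {k})).compl
    · split_ifs <;> simp

lemma measurable_envX (hxi : ∀ k, Measurable (xi k)) (hlam : ∀ k, Measurable (lam k))
    (hX : ∀ n, Measurable (X n)) (hpos : ∀ k ω, 1 ≤ xi k ω) (n : ℕ) :
    Measurable (fun ω => envP xi lam (X n ω) ω) := by
  have h : Measurable (fun p : Ω × ℤ => envP xi lam p.2 p.1) :=
    measurable_from_prod_countable_left (fun z => measurable_envP xi lam hxi hlam hpos z)
  exact h.comp (measurable_id.prodMk (hX n))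

end Aux2
section Aux3
set_option linter.unusedSectionVars false
variable {Ω : Type*} [MeasurableSpace Ω] (xi : ℤ → Ω → ℕ) (lam : ℤ → Ω → ℝ) (X : ℕ → Ω → ℤ)

/-- Discrete intermediate value: a ±1 walk from 0 hits every site between 0 and its position. -/
lemma walk_ivt {ω : Ω} (h0 : X 0 ω = 0)
    (hnn : ∀ n : ℕ, X (n+1) ω = X n ω + 1 ∨ X (n+1) ω = X n ω - 1)
    {a : ℤ} (ha : 0 ≤ a) : ∀ m : ℕ, a ≤ X m ω → ∃ j ≤ m, X j ω = a := by
  intro m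
  induction m with
  | zero => intro hm; exact ⟨0, le_rfl, by omega⟩
  | succ m ih =>
    intro hm
    by_cases hc : a ≤ X m ω
    · obtain ⟨j, hj, hja⟩ := ih hc
      exact ⟨j, by omega, hja⟩
    · rcases hnn m with h | h
      · exact ⟨m+1, le_rfl, by omega⟩
      · omega

lemma hitT_mono {ω : Ω} (h0 : X 0 ω = 0)
    (hnn : ∀ n : ℕ, X (n+1) ω = X n ω + 1 ∨ X (n+1) ω = X n ω - 1)
    {a N : ℤ} (ha : 0 ≤ a) (haN : a ≤ N) (hhit : ∃ j : ℕ, X j ω = N) :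
    hitT X a ω ≤ hitT X N ω := by
  have hne : {m : ℕ | X m ω = N}.Nonempty := hhit
  have hmem : X (hitT X N ω) ω = N := Nat.sInf_mem hne
  obtain ⟨j, hj, hja⟩ := walk_ivt X h0 hnn ha (hitT X N ω) (by omega)
  exact le_trans (Nat.sInf_le hja) hj

lemma maxLoc_mono {ω : Ω} (h0 : X 0 ω = 0)
    (hnn : ∀ n : ℕ, X (n+1) ω = X n ω + 1 ∨ X (n+1) ω = X n ω - 1)
    {a N : ℤ} (ha : 0 ≤ a) (haN : a ≤ N) (hhit : ∃ j : ℕ, X j ω = N) :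
    maxLoc X a ω ≤ maxLoc X N ω := by
  apply iSup₂_le
  intro k hk
  have hloc : locL X k a ω ≤ locL X k N ω := by
    apply Finset.card_le_card
    apply Finset.filter_subset_filter
    apply Finset.range_subset_range.mpr
    have := hitT_mono X h0 hnn ha haN hhit
    omega
  calc ((locL X k a ω : ℝ≥0∞)) ≤ (locL X k N ω : ℝ≥0∞) := by exact_mod_cast hloc
  _ ≤ maxLoc X N ω := le_iSup₂_of_le k (le_trans hk haN) le_rfl

lemma one_le_maxLoc {ω : Ω} (h0 : X 0 ω = 0) {N : ℤ} (hN : 0 ≤ N) :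
    1 ≤ maxLoc X N ω := by
  have hloc : 1 ≤ locL X 0 N ω := by
    rw [locL]
    apply Finset.card_pos.mpr
    exact ⟨0, by simp [h0]⟩
  calc (1:ℝ≥0∞) ≤ (locL X 0 N ω : ℝ≥0∞) := by exact_mod_cast hloc
  _ ≤ maxLoc X N ω := le_iSup₂_of_le 0 hN le_rfl

lemma maxLoc_of_unhit {ω : Ω} (h0 : X 0 ω = 0) {N : ℤ} (hN : 0 ≤ N)
    (hun : ∀ j : ℕ, X j ω ≠ N) : maxLoc X N ω = 1 := by
  have hT : hitT X N ω = 0 := by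
    rw [hitT]
    convert Nat.sInf_empty
    ext m; simp [hun m]
  apply le_antisymm
  · apply iSup₂_le
    intro k hk
    have : locL X k N ω ≤ 1 := by
      rw [locL, hT]
      apply le_trans (Finset.card_filter_le _ _)
      simp
    exact_mod_cast this
  · exact one_le_maxLoc X h0 hN

lemma measurable_unhit (hxi : ∀ k, Measurable (xi k)) (hX : ∀ n, Measurable (X n)) (m : ℤ) :
    MeasurableSet {ω : Ω | ∀ j : ℕ, X j ω ≠ Spt xi m ω} := by
  have : {ω : Ω | ∀ j : ℕ, X j ω ≠ Spt xi m ω}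
      = ⋂ j : ℕ, (⋃ z : ℤ, ({ω | X j ω = z} ∩ {ω | Spt xi m ω = z}))ᶜ := by
    ext ω
    simp only [Set.mem_iInter, Set.mem_compl_iff, Set.mem_iUnion, Set.mem_inter_iff,
      Set.mem_setOf_eq, not_exists, not_and, Set.mem_setOf_eq]
    constructor
    · intro h j z hXz hSz; exact h j (by rw [hXz, hSz])
    · intro h j hXj; exact h j (Spt xi m ω) hXj rfl
  rw [this]
  refine MeasurableSet.iInter fun j => (MeasurableSet.iUnion fun z => ?_).compl
  exact ((hX j) (by trivial : MeasurableSet {z})).inter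
    ((measurable_Spt xi hxi m) (by trivial : MeasurableSet {z}))

end Aux3
section Aux4
set_option linter.unusedSectionVars false
variable {Ω : Type*} [MeasurableSpace Ω] (xi : ℤ → Ω → ℕ) (lam : ℤ → Ω → ℝ) (X : ℕ → Ω → ℤ)

lemma pr_step (Pr : Measure Ω) [IsProbabilityMeasure Pr] (hRW : IsRWSRE Pr xi lam X) (n : ℕ) :
    Pr ({ω | X (n+1) ω = X n ω + 1 ∨ X (n+1) ω = X n ω - 1}ᶜ) = 0 := by
  have hX := hRW.meas_X
  set f : Ω → ℝ := fun ω => envP xi lam (X n ω) ω with hf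
  have hfm : Measurable f := measurable_envX xi lam X hRW.meas_xi hRW.meas_lam hX hRW.xi_pos n
  have hfb : ∀ ω, f ω ∈ Set.Icc (0:ℝ) 1 := fun ω => envP_mem xi lam hRW.lam_mem (X n ω) ω
  have hfi : Integrable f Pr := by
    refine (integrable_const (1:ℝ)).mono' hfm.aestronglyMeasurable ?_
    filter_upwards with ω
    rw [Real.norm_eq_abs, abs_le]
    exact ⟨by linarith [(hfb ω).1], (hfb ω).2⟩
  set U : Set Ω := {ω | X (n+1) ω = X n ω + 1} with hU
  set D : Set Ω := {ω | X (n+1) ω = X n ω - 1} with hD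
  have hUm : MeasurableSet U := by
    have : U = (fun ω => X (n+1) ω - X n ω) ⁻¹' {1} := by
      ext ω; simp [hU]; omega
    rw [this]
    exact ((hX (n+1)).sub (hX n)) (by trivial)
  have hDm : MeasurableSet D := by
    have : D = (fun ω => X (n+1) ω - X n ω) ⁻¹' {-1} := by
      ext ω; simp [hD]; omega
    rw [this]
    exact ((hX (n+1)).sub (hX n)) (by trivial)
  have h1 : (Pr U).toReal = ∫ ω, f ω ∂Pr := by
    have := hRW.step_up n Set.univ MeasurableSet.univ
    rwa [Set.univ_inter, setIntegral_univ] at this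
  have h2 : (Pr D).toReal = 1 - ∫ ω, f ω ∂Pr := by
    have := hRW.step_down n Set.univ MeasurableSet.univ
    rw [Set.univ_inter, setIntegral_univ] at this
    rw [this, integral_sub (integrable_const 1) hfi]
    simp
  have hdisj : Disjoint U D := by
    rw [Set.disjoint_left]
    intro ω h1 h2
    simp only [hU, hD, Set.mem_setOf_eq] at h1 h2
    omega
  have hsum : Pr (U ∪ D) = Pr U + Pr D := measure_union hdisj hDm
  have hfin : Pr (U ∪ D) ≠ ⊤ := measure_ne_top _ _
  have htr : (Pr (U ∪ D)).toReal = 1 := by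
    rw [hsum, ENNReal.toReal_add (measure_ne_top _ _) (measure_ne_top _ _), h1, h2]
    ring
  have hone : Pr (U ∪ D) = 1 := by
    rcases eq_or_ne (Pr (U ∪ D)) ⊤ with h | h
    · exact absurd h hfin
    · have := (ENNReal.toReal_eq_one_iff _).mp htr
      exact this
  have : {ω | X (n+1) ω = X n ω + 1 ∨ X (n+1) ω = X n ω - 1} = U ∪ D := rfl
  rw [this, measure_compl (hUm.union hDm) hfin, hone, measure_univ]
  simp

lemma pr_nn (Pr : Measure Ω) [IsProbabilityMeasure Pr] (hRW : IsRWSRE Pr xi lam X) :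
    Pr ({ω | ∀ n : ℕ, X (n+1) ω = X n ω + 1 ∨ X (n+1) ω = X n ω - 1}ᶜ) = 0 := by
  have : {ω | ∀ n : ℕ, X (n+1) ω = X n ω + 1 ∨ X (n+1) ω = X n ω - 1}ᶜ
      = ⋃ n : ℕ, ({ω | X (n+1) ω = X n ω + 1 ∨ X (n+1) ω = X n ω - 1}ᶜ) := by
    ext ω; simp [not_forall]
  rw [this]
  exact measure_iUnion_null fun n => pr_step xi lam X Pr hRW n

end Aux4
section Aux5
set_option linter.unusedSectionVars false
variable {Ω : Type*} [MeasurableSpace Ω] (xi : ℤ → Ω → ℕ) (lam : ℤ → Ω → ℝ) (X : ℕ → Ω → ℤ)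

lemma lln_ae (Pr : Measure Ω) [IsProbabilityMeasure Pr] (hRW : IsRWSRE Pr xi lam X)
    (hmom : Integrable (fun ω => (xi 0 ω : ℝ)) Pr) :
    ∀ᵐ ω ∂Pr, Tendsto (fun m : ℕ => ((Spt xi (m:ℤ) ω : ℤ) : ℝ) / m) atTop
      (nhds (∫ ω, (xi 0 ω : ℝ) ∂Pr)) := by
  set Y : ℕ → Ω → ℝ := fun j ω => ((xi ((j:ℤ)+1) ω : ℕ) : ℝ) with hY
  have hg : Measurable (fun p : ℕ × ℝ => ((p.1 : ℕ) : ℝ)) :=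
    (measurable_from_top (f := fun q : ℕ => (q : ℝ))).comp measurable_fst
  have hident : ∀ i, IdentDistrib (Y i) (Y 0) Pr Pr := by
    intro i
    have h1 := (hRW.ident ((i:ℤ)+1)).trans (hRW.ident (((0:ℕ):ℤ)+1)).symm
    exact h1.comp hg
  have h01 : IdentDistrib (Y 0) (fun ω => (xi 0 ω : ℝ)) Pr Pr := by
    have := (hRW.ident (((0:ℕ):ℤ)+1)).comp hg
    exact this
  have hint : Integrable (Y 0) Pr := (h01.integrable_iff).mpr hmom
  have hindep : Pairwise (Function.onFun (IndepFun · · Pr) Y) := by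
    intro i j hij
    have hne : ((i:ℤ)+1) ≠ ((j:ℤ)+1) := by
      intro h; apply hij; exact_mod_cast (by omega : (i:ℤ) = (j:ℤ))
    exact (hRW.indep.indepFun hne).comp hg hg
  have := strong_law_ae_real Y hint hindep hident
  have hEeq : ∫ ω, Y 0 ω ∂Pr = ∫ ω, (xi 0 ω : ℝ) ∂Pr := h01.integral_eq
  rw [hEeq] at this
  filter_upwards [this] with ω hω
  refine Tendsto.congr (fun m => ?_) hω
  rw [Spt_nat]
  push_cast
  rfl

lemma one_le_E (Pr : Measure Ω) [IsProbabilityMeasure Pr] (hRW : IsRWSRE Pr xi lam X)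
    (hmom : Integrable (fun ω => (xi 0 ω : ℝ)) Pr) :
    1 ≤ ∫ ω, (xi 0 ω : ℝ) ∂Pr := by
  have h : ∫ ω, (1:ℝ) ∂Pr ≤ ∫ ω, (xi 0 ω : ℝ) ∂Pr := by
    apply integral_mono (integrable_const 1) hmom
    intro ω
    show (1:ℝ) ≤ ((xi 0 ω : ℕ) : ℝ)
    exact_mod_cast hRW.xi_pos 0 ω
  simpa using h

lemma lln_inmeasure (Pr : Measure Ω) [IsProbabilityMeasure Pr] (hRW : IsRWSRE Pr xi lam X)
    (hmom : Integrable (fun ω => (xi 0 ω : ℝ)) Pr) :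
    TendstoInMeasure Pr (fun (m : ℕ) ω => ((Spt xi (m:ℤ) ω : ℤ) : ℝ) / m) atTop
      (fun _ => ∫ ω, (xi 0 ω : ℝ) ∂Pr) := by
  apply tendstoInMeasure_of_tendsto_ae
  · intro m
    exact (((measurable_from_top (f := fun z : ℤ => (z:ℝ))).comp
      (measurable_Spt xi hRW.meas_xi (m:ℤ))).div_const _).aestronglyMeasurable
  · exact lln_ae xi lam X Pr hRW hmom

end Aux5
section Aux6
set_option linter.unusedSectionVars false
variable {Ω : Type*} [MeasurableSpace Ω] (xi : ℤ → Ω → ℕ) (lam : ℤ → Ω → ℝ) (X : ℕ → Ω → ℤ)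

/-- The event appearing in the hypothesis `hlim`. -/
def Qset (b : ℕ → ℝ) (y : ℝ) (k : ℕ) : Set Ω :=
  {ω | ENNReal.ofReal (y * b k) < maxLoc X (Spt xi (k : ℤ) ω) ω}

/-- The target event. -/
def Rset (b : ℕ → ℝ) (x : ℝ) (n : ℕ) : Set Ω :=
  {ω | ENNReal.ofReal (x * b n) < maxLoc X (n : ℤ) ω}

/-- The event that the site `S_k` is never visited. -/
def Jset (k : ℕ) : Set Ω := {ω | ∀ j : ℕ, X j ω ≠ Spt xi (k : ℤ) ω}

/-- The event that all steps of the walk are nearest-neighbor. -/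
def NNset : Set Ω :=
  {ω | ∀ n : ℕ, X (n + 1) ω = X n ω + 1 ∨ X (n + 1) ω = X n ω - 1}

lemma toReal_le_three (Pr : Measure Ω) [IsProbabilityMeasure Pr] {A B C D N : Set Ω}
    (h : A ⊆ B ∪ C ∪ D ∪ N) (hN : Pr N = 0) :
    (Pr A).toReal ≤ (Pr B).toReal + (Pr C).toReal + (Pr D).toReal := by
  have h1 : Pr A ≤ Pr B + Pr C + Pr D := by
    calc Pr A ≤ Pr (B ∪ C ∪ D ∪ N) := measure_mono h
    _ ≤ Pr (B ∪ C ∪ D) + Pr N := measure_union_le _ _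
    _ = Pr (B ∪ C ∪ D) := by rw [hN, add_zero]
    _ ≤ Pr (B ∪ C) + Pr D := measure_union_le _ _
    _ ≤ Pr B + Pr C + Pr D := by
        exact add_le_add (measure_union_le _ _) le_rfl
  have h2 : (Pr A).toReal ≤ (Pr B + Pr C + Pr D).toReal := by
    apply ENNReal.toReal_mono _ h1
    exact ENNReal.add_ne_top.mpr ⟨ENNReal.add_ne_top.mpr ⟨measure_ne_top _ _, measure_ne_top _ _⟩,
      measure_ne_top _ _⟩
  rwa [ENNReal.toReal_add (ENNReal.add_ne_top.mpr ⟨measure_ne_top _ _, measure_ne_top _ _⟩)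
    (measure_ne_top _ _), ENNReal.toReal_add (measure_ne_top _ _) (measure_ne_top _ _)] at h2

lemma floor_mul_tendsto {t : ℝ} (ht : 0 < t) :
    Tendsto (fun n : ℕ => ⌊t * (n : ℝ)⌋₊) atTop atTop :=
  tendsto_nat_floor_atTop.comp (Tendsto.const_mul_atTop ht tendsto_natCast_atTop_atTop)

lemma rpow_cancel1 {γ : ℝ} (hγ : 0 < γ) {a : ℝ} (ha : 0 < a) :
    (a ^ ((1:ℝ)/γ)) ^ (-γ) = a⁻¹ := by
  rw [← Real.rpow_mul ha.le]
  have h : (1/γ) * (-γ) = -1 := by field_simp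
  rw [h, Real.rpow_neg_one]

lemma rpow_cancel2 {γ : ℝ} (hγ : 0 < γ) {a : ℝ} (ha : 0 < a) :
    (a ^ (-γ)) ^ ((1:ℝ)/γ) = a⁻¹ := by
  rw [← Real.rpow_mul ha.le]
  have h : (-γ) * (1/γ) = -1 := by field_simp
  rw [h, Real.rpow_neg_one]

/-- Pathwise inclusion for the upper bound. -/
lemma incl_up (b : ℕ → ℝ) (hstart : ∀ ω, X 0 ω = 0) {y xr : ℝ} {k n : ℕ}
    (hrat : y * b k ≤ xr * b n) :
    Rset X b xr n ⊆
      Qset xi X b y k ∪ {ω | Spt xi (k : ℤ) ω < (n : ℤ)} ∪ Jset xi X k ∪ (NNset X)ᶜ := by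
  intro ω hω
  by_cases hNNω : ω ∈ NNset X
  · by_cases hS : Spt xi (k : ℤ) ω < (n : ℤ)
    · exact Or.inl (Or.inl (Or.inr hS))
    · by_cases hJω : ω ∈ Jset xi X k
      · exact Or.inl (Or.inr hJω)
      · refine Or.inl (Or.inl (Or.inl ?_))
        have hhit : ∃ j : ℕ, X j ω = Spt xi (k : ℤ) ω := by
          by_contra hcon
          push_neg at hcon
          exact hJω hcon
        have hmono := maxLoc_mono X (hstart ω) hNNω (Int.natCast_nonneg n)
          (not_lt.mp hS) hhit
        have h1 : ENNReal.ofReal (y * b k) ≤ ENNReal.ofReal (xr * b n) :=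
          ENNReal.ofReal_le_ofReal hrat
        exact lt_of_le_of_lt h1 (lt_of_lt_of_le hω hmono)
  · exact Or.inr hNNω

/-- Pathwise inclusion for the lower bound. -/
lemma incl_low (b : ℕ → ℝ) (hstart : ∀ ω, X 0 ω = 0) (hpos : ∀ k ω, 1 ≤ xi k ω)
    {y xr : ℝ} {k n : ℕ} (hrat : xr * b n ≤ y * b k) :
    Qset xi X b y k ⊆
      Rset X b xr n ∪ {ω | (n : ℤ) < Spt xi (k : ℤ) ω} ∪ Jset xi X n ∪ (NNset X)ᶜ := by
  intro ω hω
  by_cases hNNω : ω ∈ NNset X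
  · by_cases hS : (n : ℤ) < Spt xi (k : ℤ) ω
    · exact Or.inl (Or.inl (Or.inr hS))
    · by_cases hJω : ω ∈ Jset xi X n
      · exact Or.inl (Or.inr hJω)
      · refine Or.inl (Or.inl (Or.inl ?_))
        have hhitS : ∃ j : ℕ, X j ω = Spt xi (n : ℤ) ω := by
          by_contra hcon
          push_neg at hcon
          exact hJω hcon
        obtain ⟨j, hj⟩ := hhitS
        have hSn : (n : ℤ) ≤ Spt xi (n : ℤ) ω := Spt_nat_ge xi hpos n ω
        obtain ⟨j', _, hj'⟩ := walk_ivt X (hstart ω) hNNω (Int.natCast_nonneg n) j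
          (by rw [hj]; exact hSn)
        have hhitn : ∃ j : ℕ, X j ω = (n : ℤ) := ⟨j', hj'⟩
        have hSk0 : (0:ℤ) ≤ Spt xi (k : ℤ) ω :=
          le_trans (Int.natCast_nonneg k) (Spt_nat_ge xi hpos k ω)
        have hmono := maxLoc_mono X (hstart ω) hNNω hSk0 (not_lt.mp hS) hhitn
        have h1 : ENNReal.ofReal (xr * b n) ≤ ENNReal.ofReal (y * b k) :=
          ENNReal.ofReal_le_ofReal hrat
        exact lt_of_le_of_lt h1 (lt_of_lt_of_le hω hmono)
  · exact Or.inr hNNω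

end Aux6

set_option maxHeartbeats 2000000 in
/-- Passing from the maximum along marked points `S_n` to the maximum along all points:
if the maximal local time up to `S_n`, scaled by a regularly varying `b(n)`, has a Fréchet
limit with constant `c`, then the one up to `n` has one with constant `c/Eξ`. -/
theorem max_local_time_marked_to_all
    (Pr : Measure Ω) [IsProbabilityMeasure Pr]
    (xi : ℤ → Ω → ℕ) (lam : ℤ → Ω → ℝ) (X : ℕ → Ω → ℤ)
    (hRW : IsRWSRE Pr xi lam X)
    -- transience: E log ξ < ∞ and E log ρ < 0
    (hlogxi : Integrable (fun ω => Real.log (xi 0 ω)) Pr)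
    (hlogrho : Integrable (fun ω => Real.log (rhoF lam 0 ω)) Pr)
    (hlogrho_neg : ∫ ω, Real.log (rhoF lam 0 ω) ∂Pr < 0)
    (hmomξ : Integrable (fun ω => (xi 0 ω : ℝ)) Pr)
    (c γ : ℝ) (hc : 0 < c) (hγ : 0 < γ) (b : ℕ → ℝ)
    (hb : ∀ t : ℝ, 0 < t →
      Tendsto (fun n : ℕ => b ⌊t * (n : ℝ)⌋₊ / b n) atTop (nhds (t ^ (1 / γ))))
    (hlim : ∀ x : ℝ, 0 < x →
      Tendsto (fun n : ℕ =>
          (Pr {ω | ENNReal.ofReal (x * b n) < maxLoc X (Spt xi n ω) ω}).toReal)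
        atTop (nhds (1 - Real.exp (-c * x ^ (-γ))))) :
    ∀ x : ℝ, 0 < x →
      Tendsto (fun n : ℕ =>
          (Pr {ω | ENNReal.ofReal (x * b n) < maxLoc X n ω}).toReal)
        atTop (nhds (1 - Real.exp (-(c / ∫ ω, (xi 0 ω : ℝ) ∂Pr) * x ^ (-γ)))) := by
  intro x hx
  have hX0 := hRW.start
  have hE1 : 1 ≤ ∫ ω, (xi 0 ω : ℝ) ∂Pr := one_le_E xi lam X Pr hRW hmomξ
  have hLLN : TendstoInMeasure Pr (fun (m : ℕ) ω => ((Spt xi (m:ℤ) ω : ℤ) : ℝ) / m) atTop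
      (fun _ => ∫ ω, (xi 0 ω : ℝ) ∂Pr) := lln_inmeasure xi lam X Pr hRW hmomξ
  obtain ⟨E, hEdef⟩ : ∃ E : ℝ, ∫ ω, (xi 0 ω : ℝ) ∂Pr = E := ⟨_, rfl⟩
  rw [hEdef] at hE1 hLLN ⊢
  have hEpos : (0:ℝ) < E := by linarith
  have hNN0 : Pr ((NNset X)ᶜ) = 0 := pr_nn xi lam X Pr hRW
  have hQ : ∀ y : ℝ, 0 < y → Tendsto (fun k : ℕ => (Pr (Qset xi X b y k)).toReal) atTop
      (nhds (1 - Real.exp (-c * y ^ (-γ)))) := fun y hy => hlim y hy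
  -- `b` tends to infinity
  have hbK : ∀ K : ℝ, ∀ᶠ n : ℕ in atTop, K ≤ b n := by
    intro K
    by_contra hcon
    have hfreq : ∃ᶠ n in atTop, b n < K := by
      rw [Filter.not_eventually] at hcon
      exact hcon.mono (fun n h => not_le.mp h)
    have hK' : (0:ℝ) < max K 1 := lt_of_lt_of_le one_pos (le_max_right _ _)
    have hy : (0:ℝ) < 1 / max K 1 := by positivity
    have hlt : 1 - Real.exp (-c * (1 / max K 1) ^ (-γ)) < 1 := by
      have := Real.exp_pos (-c * (1 / max K 1) ^ (-γ)); linarith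
    have hev : ∀ᶠ m : ℕ in atTop, (Pr (Qset xi X b (1 / max K 1) m)).toReal < 1 :=
      (hQ _ hy).eventually_lt_const hlt
    obtain ⟨m, hm1, hm2⟩ := (hfreq.and_eventually hev).exists
    have hQuniv : Qset xi X b (1 / max K 1) m = Set.univ := by
      ext ω
      simp only [Qset, Set.mem_setOf_eq, Set.mem_univ, iff_true]
      have hb' : b m < max K 1 := lt_of_lt_of_le hm1 (le_max_left _ _)
      have h1 : (1 / max K 1) * b m < 1 := by
        rcases le_or_gt (b m) 0 with h | h
        · have := mul_nonpos_of_nonneg_of_nonpos hy.le h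
          linarith
        · have h2 : (1 / max K 1) * b m < (1 / max K 1) * max K 1 :=
            mul_lt_mul_of_pos_left hb' hy
          rw [one_div_mul_cancel hK'.ne'] at h2
          exact h2
      have h2 : ENNReal.ofReal ((1 / max K 1) * b m) < 1 := ENNReal.ofReal_lt_one.mpr h1
      have h3 : (1:ℝ≥0∞) ≤ maxLoc X (Spt xi (m:ℤ) ω) ω :=
        one_le_maxLoc X (hX0 ω) (le_trans (Int.natCast_nonneg m) (Spt_nat_ge xi hRW.xi_pos m ω))
      exact lt_of_lt_of_le h2 h3
    rw [hQuniv, measure_univ] at hm2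
    simp at hm2
  -- the marked points are eventually visited, with probability tending to one
  have hJle : ∀ y : ℝ, 0 < y → ∀ᶠ k : ℕ in atTop,
      (Pr (Jset xi X k)).toReal ≤ 1 - (Pr (Qset xi X b y k)).toReal := by
    intro y hy
    filter_upwards [hbK (1/y)] with k hbk
    have hsub : Qset xi X b y k ⊆ (Jset xi X k)ᶜ := by
      intro ω hω hJω
      have h0S : (0:ℤ) ≤ Spt xi (k:ℤ) ω :=
        le_trans (Int.natCast_nonneg k) (Spt_nat_ge xi hRW.xi_pos k ω)
      have hml : maxLoc X (Spt xi (k:ℤ) ω) ω = 1 := maxLoc_of_unhit X (hX0 ω) h0S hJω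
      have h1 : (1:ℝ) ≤ y * b k := by
        have h2 : y * (1/y) ≤ y * b k := mul_le_mul_of_nonneg_left hbk hy.le
        rwa [mul_one_div, div_self hy.ne'] at h2
      have h2 : (1:ℝ≥0∞) ≤ ENNReal.ofReal (y * b k) := ENNReal.one_le_ofReal.mpr h1
      have hω' : ENNReal.ofReal (y * b k) < maxLoc X (Spt xi (k:ℤ) ω) ω := hω
      rw [hml] at hω'
      exact absurd hω' (not_lt.mpr h2)
    have hJm : MeasurableSet (Jset xi X k) := measurable_unhit xi X hRW.meas_xi hRW.meas_X (k:ℤ)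
    have hcompl : Pr ((Jset xi X k)ᶜ) = 1 - Pr (Jset xi X k) := by
      rw [measure_compl hJm (measure_ne_top _ _), measure_univ]
    have h2 : (Pr (Qset xi X b y k)).toReal ≤ (Pr ((Jset xi X k)ᶜ)).toReal :=
      ENNReal.toReal_mono (measure_ne_top _ _) (measure_mono hsub)
    have h3 : (Pr ((Jset xi X k)ᶜ)).toReal = 1 - (Pr (Jset xi X k)).toReal := by
      rw [hcompl, ENNReal.toReal_sub_of_le prob_le_one ENNReal.one_ne_top, ENNReal.toReal_one]
    linarith
  have hJ0 : Tendsto (fun k : ℕ => (Pr (Jset xi X k)).toReal) atTop (nhds 0) := by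
    rw [Metric.tendsto_atTop]
    intro ε hε
    have hA1 : (1:ℝ) ≤ max 1 (-Real.log (ε/4) + 1) := le_max_left _ _
    have hAc : 0 < max 1 (-Real.log (ε/4) + 1) / c := by positivity
    have hy : 0 < (max 1 (-Real.log (ε/4) + 1) / c) ^ (-((1:ℝ)/γ)) :=
      Real.rpow_pos_of_pos hAc _
    have hyA : -c * ((max 1 (-Real.log (ε/4) + 1) / c) ^ (-((1:ℝ)/γ))) ^ (-γ)
        = -(max 1 (-Real.log (ε/4) + 1)) := by
      rw [← Real.rpow_mul hAc.le]
      have h : (-((1:ℝ)/γ)) * (-γ) = 1 := by field_simp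
      rw [h, Real.rpow_one]
      field_simp
    have hexp : Real.exp (-c * ((max 1 (-Real.log (ε/4) + 1) / c) ^ (-((1:ℝ)/γ))) ^ (-γ)) < ε/2 := by
      rw [hyA]
      have h3 : -(max 1 (-Real.log (ε/4) + 1)) < Real.log (ε/4) := by
        have := le_max_right 1 (-Real.log (ε/4) + 1)
        linarith
      have h4 := Real.exp_lt_exp.mpr h3
      rw [Real.exp_log (by linarith : (0:ℝ) < ε/4)] at h4
      linarith
    have hev1 : ∀ᶠ k : ℕ in atTop,
        1 - Real.exp (-c * ((max 1 (-Real.log (ε/4) + 1) / c) ^ (-((1:ℝ)/γ))) ^ (-γ)) - ε/4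
          ≤ (Pr (Qset xi X b ((max 1 (-Real.log (ε/4) + 1) / c) ^ (-((1:ℝ)/γ))) k)).toReal :=
      ((hQ _ hy).eventually_const_le (by linarith))
    have hcomb : ∀ᶠ k : ℕ in atTop, dist ((Pr (Jset xi X k)).toReal) 0 < ε := by
      filter_upwards [hJle _ hy, hev1] with k h1 h2
      have h0 : 0 ≤ (Pr (Jset xi X k)).toReal := ENNReal.toReal_nonneg
      rw [Real.dist_eq, sub_zero, abs_of_nonneg h0]
      linarith
    exact eventually_atTop.mp hcomb
  -- Claim 1 : upper bound
  have claim1 : ∀ y : ℝ, 0 < y → y < x * E ^ ((1:ℝ)/γ) → ∀ η : ℝ, 0 < η →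
      ∀ᶠ n : ℕ in atTop, (Pr (Rset X b x n)).toReal ≤ (1 - Real.exp (-c * y ^ (-γ))) + η := by
    intro y hy hyz η hη
    have hxy : (0:ℝ) < y / x := div_pos hy hx
    have hTpos : 0 < (y/x) ^ (-γ) := Real.rpow_pos_of_pos hxy _
    have hT : 1/E < (y/x) ^ (-γ) := by
      have h1 : y / x < E ^ ((1:ℝ)/γ) := by
        rw [div_lt_iff₀ hx, mul_comm]
        exact hyz
      have h2 := Real.rpow_lt_rpow_of_neg hxy h1 (by linarith : -γ < 0)
      rw [rpow_cancel1 hγ hEpos] at h2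
      rw [one_div]
      exact h2
    have h1E : 0 < 1/E := one_div_pos.mpr hEpos
    obtain ⟨t, htpos, ht1, ht2⟩ : ∃ t : ℝ, 0 < t ∧ 1/E < t ∧ t < (y/x) ^ (-γ) :=
      ⟨(1/E + (y/x) ^ (-γ))/2, by linarith, by linarith, by linarith⟩
    have htE : 1 < t * E := by
      rw [div_lt_iff₀ hEpos] at ht1
      linarith
    obtain ⟨κ, hκpos, hEκt, hEκpos⟩ : ∃ κ : ℝ, 0 < κ ∧ 1 < (E - κ)*t ∧ 0 < E - κ := by
      refine ⟨(t*E - 1)/(2*t), div_pos (by linarith) (by linarith), ?_, ?_⟩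
      · have h2 : (E - (t*E - 1)/(2*t))*t = (t*E + 1)/2 := by
          field_simp
          ring
        rw [h2]
        linarith
      · have h2 : E - (t*E - 1)/(2*t) = (t*E + 1)/(2*t) := by
          field_simp
          ring
        rw [h2]
        exact div_pos (by linarith) (by linarith)
    have hmt : Tendsto (fun n : ℕ => ⌊t * (n:ℝ)⌋₊) atTop atTop := floor_mul_tendsto htpos
    have hyt : t ^ ((1:ℝ)/γ) < x / y := by
      have h1 : t ^ ((1:ℝ)/γ) < ((y/x) ^ (-γ)) ^ ((1:ℝ)/γ) :=
        Real.rpow_lt_rpow htpos.le ht2 (by positivity)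
      rwa [rpow_cancel2 hγ hxy, inv_div] at h1
    have hratio : ∀ᶠ n : ℕ in atTop, y * b ⌊t * (n:ℝ)⌋₊ ≤ x * b n := by
      have h1γ : t ^ ((1:ℝ)/γ) = t ^ (1/γ) := rfl
      filter_upwards [(hb t htpos).eventually_lt_const hyt, hbK 1] with n h1 h2
      have hbn : (0:ℝ) < b n := by linarith
      rw [div_lt_iff₀ hbn] at h1
      have h3 := mul_lt_mul_of_pos_left h1 hy
      have h4 : y * (x / y * b n) = x * b n := by
        field_simp
      linarith
    have hLLN1 : Tendsto (fun n : ℕ =>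
        (Pr {ω : Ω | κ ≤ dist (((Spt xi ((⌊t * (n:ℝ)⌋₊ : ℕ) : ℤ) ω : ℤ) : ℝ)
          / (⌊t * (n:ℝ)⌋₊ : ℕ)) E}).toReal) atTop (nhds 0) := by
      have h1 := (tendstoInMeasure_iff_dist.mp hLLN κ hκpos).comp hmt
      have h2 := (ENNReal.tendsto_toReal (a := 0) (by simp)).comp h1
      exact h2
    have hev1 : ∀ᶠ n : ℕ in atTop, (E - κ) ≤ ((E - κ)*t - 1) * (n:ℝ) :=
      (Tendsto.const_mul_atTop (by linarith) (tendsto_natCast_atTop_atTop (R := ℝ))).eventually_ge_atTop _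
    have hev2 : ∀ᶠ n : ℕ in atTop, 1 ≤ ⌊t * (n:ℝ)⌋₊ := hmt.eventually_ge_atTop 1
    have hQev : ∀ᶠ n : ℕ in atTop, (Pr (Qset xi X b y ⌊t * (n:ℝ)⌋₊)).toReal
        ≤ (1 - Real.exp (-c * y ^ (-γ))) + η/3 :=
      ((hQ y hy).comp hmt).eventually_le_const (by linarith)
    have hJev : ∀ᶠ n : ℕ in atTop, (Pr (Jset xi X ⌊t * (n:ℝ)⌋₊)).toReal ≤ η/3 :=
      (hJ0.comp hmt).eventually_le_const (by linarith)
    have hLev : ∀ᶠ n : ℕ in atTop,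
        (Pr {ω : Ω | κ ≤ dist (((Spt xi ((⌊t * (n:ℝ)⌋₊ : ℕ) : ℤ) ω : ℤ) : ℝ)
          / (⌊t * (n:ℝ)⌋₊ : ℕ)) E}).toReal ≤ η/3 :=
      hLLN1.eventually_le_const (by linarith)
    filter_upwards [hratio, hQev, hJev, hLev, hev1, hev2] with n hrat hQn hJn hLn he1 he2
    have hsub2 : {ω : Ω | Spt xi ((⌊t * (n:ℝ)⌋₊ : ℕ) : ℤ) ω < (n:ℤ)} ⊆
        {ω : Ω | κ ≤ dist (((Spt xi ((⌊t * (n:ℝ)⌋₊ : ℕ) : ℤ) ω : ℤ) : ℝ)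
          / (⌊t * (n:ℝ)⌋₊ : ℕ)) E} := by
      intro ω hω
      simp only [Set.mem_setOf_eq] at hω ⊢
      by_contra hcon
      push_neg at hcon
      rw [Real.dist_eq] at hcon
      obtain ⟨hl, hr⟩ := abs_lt.mp hcon
      have hm1 : (1:ℝ) ≤ (⌊t * (n:ℝ)⌋₊ : ℝ) := by exact_mod_cast he2
      have hmpos : (0:ℝ) < (⌊t * (n:ℝ)⌋₊ : ℝ) := by linarith
      have hfl : t * (n:ℝ) - 1 < (⌊t * (n:ℝ)⌋₊ : ℝ) := by
        have := Nat.lt_floor_add_one (t * (n:ℝ))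
        linarith
      have hS : (E - κ) * (⌊t * (n:ℝ)⌋₊ : ℝ)
          < ((Spt xi ((⌊t * (n:ℝ)⌋₊ : ℕ) : ℤ) ω : ℤ) : ℝ) := by
        have h5 : E - κ < ((Spt xi ((⌊t * (n:ℝ)⌋₊ : ℕ) : ℤ) ω : ℤ) : ℝ)
            / (⌊t * (n:ℝ)⌋₊ : ℝ) := by linarith
        have h6 := mul_lt_mul_of_pos_right h5 hmpos
        rwa [div_mul_cancel₀ _ hmpos.ne'] at h6
      have hSn : ((Spt xi ((⌊t * (n:ℝ)⌋₊ : ℕ) : ℤ) ω : ℤ) : ℝ) < (n:ℝ) := by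
        exact_mod_cast hω
      nlinarith [mul_lt_mul_of_pos_left hfl hEκpos]
    have hsub := incl_up xi X b hX0 hrat
    have h3 := toReal_le_three Pr hsub hNN0
    have h4 : (Pr {ω : Ω | Spt xi ((⌊t * (n:ℝ)⌋₊ : ℕ) : ℤ) ω < (n:ℤ)}).toReal
        ≤ (Pr {ω : Ω | κ ≤ dist (((Spt xi ((⌊t * (n:ℝ)⌋₊ : ℕ) : ℤ) ω : ℤ) : ℝ)
          / (⌊t * (n:ℝ)⌋₊ : ℕ)) E}).toReal :=
      ENNReal.toReal_mono (measure_ne_top _ _) (measure_mono hsub2)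
    linarith
  -- Claim 2 : lower bound
  have claim2 : ∀ y : ℝ, x * E ^ ((1:ℝ)/γ) < y → ∀ η : ℝ, 0 < η →
      ∀ᶠ n : ℕ in atTop, (1 - Real.exp (-c * y ^ (-γ))) - η ≤ (Pr (Rset X b x n)).toReal := by
    intro y hyz η hη
    have hy : 0 < y := lt_trans (mul_pos hx (Real.rpow_pos_of_pos hEpos _)) hyz
    have hxy : (0:ℝ) < y / x := div_pos hy hx
    have hTpos : 0 < (y/x) ^ (-γ) := Real.rpow_pos_of_pos hxy _
    have hT : (y/x) ^ (-γ) < 1/E := by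
      have h1 : E ^ ((1:ℝ)/γ) < y / x := by
        rw [lt_div_iff₀ hx, mul_comm]
        exact hyz
      have h2 := Real.rpow_lt_rpow_of_neg (Real.rpow_pos_of_pos hEpos _) h1
        (by linarith : -γ < 0)
      rw [rpow_cancel1 hγ hEpos] at h2
      rw [one_div]
      exact h2
    have h1E : 0 < 1/E := one_div_pos.mpr hEpos
    obtain ⟨t, htpos, ht1, ht2⟩ : ∃ t : ℝ, 0 < t ∧ t < 1/E ∧ (y/x) ^ (-γ) < t :=
      ⟨((y/x) ^ (-γ) + 1/E)/2, by linarith, by linarith, by linarith⟩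
    have htE : t * E < 1 := by
      rw [lt_div_iff₀ hEpos] at ht1
      exact ht1
    obtain ⟨κ, hκpos, hEκt⟩ : ∃ κ : ℝ, 0 < κ ∧ (E + κ)*t < 1 := by
      refine ⟨(1 - t*E)/(2*t), div_pos (by linarith) (by linarith), ?_⟩
      have h2 : (E + (1 - t*E)/(2*t))*t = (t*E + 1)/2 := by
        field_simp
        ring
      rw [h2]
      linarith
    have hEκpos : 0 < E + κ := by linarith
    have hmt : Tendsto (fun n : ℕ => ⌊t * (n:ℝ)⌋₊) atTop atTop := floor_mul_tendsto htpos
    have hyt : x / y < t ^ ((1:ℝ)/γ) := by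
      have h1 : ((y/x) ^ (-γ)) ^ ((1:ℝ)/γ) < t ^ ((1:ℝ)/γ) :=
        Real.rpow_lt_rpow hTpos.le ht2 (by positivity)
      rwa [rpow_cancel2 hγ hxy, inv_div] at h1
    have hratio : ∀ᶠ n : ℕ in atTop, x * b n ≤ y * b ⌊t * (n:ℝ)⌋₊ := by
      filter_upwards [(hb t htpos).eventually_const_lt hyt, hbK 1] with n h1 h2
      have hbn : (0:ℝ) < b n := by linarith
      rw [lt_div_iff₀ hbn] at h1
      have h3 := mul_lt_mul_of_pos_left h1 hy
      have h4 : y * (x / y * b n) = x * b n := by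
        field_simp
      nlinarith
    have hLLN1 : Tendsto (fun n : ℕ =>
        (Pr {ω : Ω | κ ≤ dist (((Spt xi ((⌊t * (n:ℝ)⌋₊ : ℕ) : ℤ) ω : ℤ) : ℝ)
          / (⌊t * (n:ℝ)⌋₊ : ℕ)) E}).toReal) atTop (nhds 0) := by
      have h1 := (tendstoInMeasure_iff_dist.mp hLLN κ hκpos).comp hmt
      have h2 := (ENNReal.tendsto_toReal (a := 0) (by simp)).comp h1
      exact h2
    have hev2 : ∀ᶠ n : ℕ in atTop, 1 ≤ ⌊t * (n:ℝ)⌋₊ := hmt.eventually_ge_atTop 1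
    have hev3 : ∀ᶠ n : ℕ in atTop, 1 ≤ n := eventually_ge_atTop 1
    have hQev : ∀ᶠ n : ℕ in atTop,
        (1 - Real.exp (-c * y ^ (-γ))) - η/3 ≤ (Pr (Qset xi X b y ⌊t * (n:ℝ)⌋₊)).toReal :=
      ((hQ y hy).comp hmt).eventually_const_le (by linarith)
    have hJev : ∀ᶠ n : ℕ in atTop, (Pr (Jset xi X n)).toReal ≤ η/3 :=
      hJ0.eventually_le_const (by linarith)
    have hLev : ∀ᶠ n : ℕ in atTop,
        (Pr {ω : Ω | κ ≤ dist (((Spt xi ((⌊t * (n:ℝ)⌋₊ : ℕ) : ℤ) ω : ℤ) : ℝ)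
          / (⌊t * (n:ℝ)⌋₊ : ℕ)) E}).toReal ≤ η/3 :=
      hLLN1.eventually_le_const (by linarith)
    filter_upwards [hratio, hQev, hJev, hLev, hev2, hev3] with n hrat hQn hJn hLn he2 he3
    have hsub2 : {ω : Ω | (n:ℤ) < Spt xi ((⌊t * (n:ℝ)⌋₊ : ℕ) : ℤ) ω} ⊆
        {ω : Ω | κ ≤ dist (((Spt xi ((⌊t * (n:ℝ)⌋₊ : ℕ) : ℤ) ω : ℤ) : ℝ)
          / (⌊t * (n:ℝ)⌋₊ : ℕ)) E} := by
      intro ω hω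
      simp only [Set.mem_setOf_eq] at hω ⊢
      by_contra hcon
      push_neg at hcon
      rw [Real.dist_eq] at hcon
      obtain ⟨hl, hr⟩ := abs_lt.mp hcon
      have hm1 : (1:ℝ) ≤ (⌊t * (n:ℝ)⌋₊ : ℝ) := by exact_mod_cast he2
      have hmpos : (0:ℝ) < (⌊t * (n:ℝ)⌋₊ : ℝ) := by linarith
      have hn1 : (1:ℝ) ≤ (n:ℝ) := by exact_mod_cast he3
      have hfl : (⌊t * (n:ℝ)⌋₊ : ℝ) ≤ t * (n:ℝ) := Nat.floor_le (by positivity)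
      have hS : ((Spt xi ((⌊t * (n:ℝ)⌋₊ : ℕ) : ℤ) ω : ℤ) : ℝ)
          < (E + κ) * (⌊t * (n:ℝ)⌋₊ : ℝ) := by
        have h5 : ((Spt xi ((⌊t * (n:ℝ)⌋₊ : ℕ) : ℤ) ω : ℤ) : ℝ)
            / (⌊t * (n:ℝ)⌋₊ : ℝ) < E + κ := by linarith
        have h6 := mul_lt_mul_of_pos_right h5 hmpos
        rwa [div_mul_cancel₀ _ hmpos.ne'] at h6
      have hSn : (n:ℝ) < ((Spt xi ((⌊t * (n:ℝ)⌋₊ : ℕ) : ℤ) ω : ℤ) : ℝ) := by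
        exact_mod_cast hω
      nlinarith [mul_le_mul_of_nonneg_left hfl hEκpos.le]
    have hsub := incl_low xi X b hX0 hRW.xi_pos hrat
    have h3 := toReal_le_three Pr hsub hNN0
    have h4 : (Pr {ω : Ω | (n:ℤ) < Spt xi ((⌊t * (n:ℝ)⌋₊ : ℕ) : ℤ) ω}).toReal
        ≤ (Pr {ω : Ω | κ ≤ dist (((Spt xi ((⌊t * (n:ℝ)⌋₊ : ℕ) : ℤ) ω : ℤ) : ℝ)
          / (⌊t * (n:ℝ)⌋₊ : ℕ)) E}).toReal :=
      ENNReal.toReal_mono (measure_ne_top _ _) (measure_mono hsub2)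
    linarith
  -- conclusion
  have hzpos : 0 < x * E ^ ((1:ℝ)/γ) := mul_pos hx (Real.rpow_pos_of_pos hEpos _)
  have hFzeq : 1 - Real.exp (-c * (x * E ^ ((1:ℝ)/γ)) ^ (-γ))
      = 1 - Real.exp (-(c / E) * x ^ (-γ)) := by
    have h1 : (x * E ^ ((1:ℝ)/γ)) ^ (-γ) = x ^ (-γ) * (E ^ ((1:ℝ)/γ)) ^ (-γ) :=
      Real.mul_rpow hx.le (Real.rpow_pos_of_pos hEpos _).le
    rw [h1, rpow_cancel1 hγ hEpos]
    have h2 : -c * (x ^ (-γ) * E⁻¹) = -(c / E) * x ^ (-γ) := by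
      rw [div_eq_mul_inv]
      ring
    rw [h2]
  have hFcont : ContinuousAt (fun y : ℝ => 1 - Real.exp (-c * y ^ (-γ)))
      (x * E ^ ((1:ℝ)/γ)) := by
    apply ContinuousAt.sub continuousAt_const
    apply (Real.continuous_exp.continuousAt).comp
    apply ContinuousAt.mul continuousAt_const
    exact Real.continuousAt_rpow_const _ (-γ) (Or.inl hzpos.ne')
  have hgoal : Tendsto (fun n : ℕ => (Pr (Rset X b x n)).toReal) atTop
      (nhds (1 - Real.exp (-c * (x * E ^ ((1:ℝ)/γ)) ^ (-γ)))) := by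
    rw [Metric.tendsto_atTop]
    intro ε hε
    obtain ⟨δ, hδ, hδprop⟩ := Metric.continuousAt_iff.mp hFcont (ε/4) (by linarith)
    have hmin : 0 < min δ (x * E ^ ((1:ℝ)/γ)) := lt_min hδ hzpos
    have hminδ : min δ (x * E ^ ((1:ℝ)/γ)) ≤ δ := min_le_left _ _
    have hminz : min δ (x * E ^ ((1:ℝ)/γ)) ≤ x * E ^ ((1:ℝ)/γ) := min_le_right _ _
    -- y1 below, y2 above
    have hy1pos : 0 < x * E ^ ((1:ℝ)/γ) - min δ (x * E ^ ((1:ℝ)/γ)) / 2 := by linarith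
    have hy1lt : x * E ^ ((1:ℝ)/γ) - min δ (x * E ^ ((1:ℝ)/γ)) / 2 < x * E ^ ((1:ℝ)/γ) := by
      linarith
    have hy1dist : dist (x * E ^ ((1:ℝ)/γ) - min δ (x * E ^ ((1:ℝ)/γ)) / 2)
        (x * E ^ ((1:ℝ)/γ)) < δ := by
      rw [Real.dist_eq, abs_of_nonpos (by linarith)]
      linarith
    have hy2gt : x * E ^ ((1:ℝ)/γ) < x * E ^ ((1:ℝ)/γ) + δ/2 := by linarith
    have hy2dist : dist (x * E ^ ((1:ℝ)/γ) + δ/2) (x * E ^ ((1:ℝ)/γ)) < δ := by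
      rw [Real.dist_eq, abs_of_nonneg (by linarith)]
      linarith
    have hF1 : |(1 - Real.exp (-c * (x * E ^ ((1:ℝ)/γ) - min δ (x * E ^ ((1:ℝ)/γ)) / 2) ^ (-γ)))
        - (1 - Real.exp (-c * (x * E ^ ((1:ℝ)/γ)) ^ (-γ)))| < ε/4 := by
      have h := hδprop hy1dist
      rw [Real.dist_eq] at h
      exact h
    have hF2 : |(1 - Real.exp (-c * (x * E ^ ((1:ℝ)/γ) + δ/2) ^ (-γ)))
        - (1 - Real.exp (-c * (x * E ^ ((1:ℝ)/γ)) ^ (-γ)))| < ε/4 := by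
      have h := hδprop hy2dist
      rw [Real.dist_eq] at h
      exact h
    have hup := claim1 _ hy1pos hy1lt (ε/4) (by linarith)
    have hlow := claim2 _ hy2gt (ε/4) (by linarith)
    have hcomb : ∀ᶠ n : ℕ in atTop, dist ((Pr (Rset X b x n)).toReal)
        (1 - Real.exp (-c * (x * E ^ ((1:ℝ)/γ)) ^ (-γ))) < ε := by
      filter_upwards [hup, hlow] with n h1 h2
      obtain ⟨ha1, ha2⟩ := abs_lt.mp hF1
      obtain ⟨hb1, hb2⟩ := abs_lt.mp hF2
      rw [Real.dist_eq, abs_lt]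
      constructor <;> linarith
    exact eventually_atTop.mp hcomb
  have := hgoal
  rw [hFzeq] at this
  exact this
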